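/- Strengthened concentration bound via Lᵖ norms: in the setting of the Donoho–Stark bound, if in addition ‖F‖_{p,μ}^p ≤ C ‖f‖₂^p ‖ψ‖₂^{p−2} for some p > 2, then μ(Σ) ≥ (1 − ξ²)^{p/(p−2)} C / ‖ψ‖₂². -/

import Mathlib

open MeasureTheory

theorem donoho_stark_lieb {X : Type*} [MeasurableSpace X] (μ : Measure X)
    (F : X → Quaternion ℝ) (hF : MemLp F 2 μ)
    (C nf nψ ξ p : ℝ) (hC : 0 < C) (hnf : 0 < nf) (hnψ : 0 < nψ) (hp : 2 < p)
    (hFp : MemLp F (ENNReal.ofReal p) μ)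
    (h2 : ∫ x, ‖F x‖ ^ 2 ∂μ = C * nf ^ 2)
    (hLp : ∫ x, ‖F x‖ ^ p ∂μ ≤ C * nf ^ p * nψ ^ (p - 2))
    (T : Set X) (hT : MeasurableSet T)
    (hξ0 : 0 ≤ ξ) (hξ1 : ξ < 1)
    (hconc : ∫ x in Tᶜ, ‖F x‖ ^ 2 ∂μ ≤ ξ ^ 2 * ∫ x, ‖F x‖ ^ 2 ∂μ) :
    ENNReal.ofReal ((1 - ξ ^ 2) ^ (p / (p - 2)) * C / nψ ^ 2) ≤ μ T := by
  have hp0 : 0 < p := by linarith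
  have hp2 : 0 < p - 2 := by linarith
  rcases eq_or_ne (μ T) ⊤ with hμT | hμT
  · simp [hμT]
  set m : ℝ := (μ T).toReal with hm
  have hm0 : 0 ≤ m := ENNReal.toReal_nonneg
  have hint2 : Integrable (fun x => ‖F x‖ ^ 2) μ := by
    have := hF.integrable_norm_rpow (by norm_num) (by norm_num)
    simpa [Real.rpow_natCast] using this
  have hintp : Integrable (fun x => ‖F x‖ ^ p) μ := by
    have := hFp.integrable_norm_rpow (by simpa [ENNReal.ofReal_eq_zero] using not_le.mpr hp0)
      ENNReal.ofReal_ne_top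
    simpa [ENNReal.toReal_ofReal hp0.le] using this
  have hsplit : (∫ x in T, ‖F x‖ ^ 2 ∂μ) + ∫ x in Tᶜ, ‖F x‖ ^ 2 ∂μ = ∫ x, ‖F x‖ ^ 2 ∂μ :=
    integral_add_compl hT hint2
  have hAT : (1 - ξ ^ 2) * (C * nf ^ 2) ≤ ∫ x in T, ‖F x‖ ^ 2 ∂μ := by
    have h' := hconc
    rw [h2] at h' hsplit
    nlinarith
  have hconj : Real.HolderConjugate (p / (p - 2)) (p / 2) := by
    rw [Real.holderConjugate_iff]
    constructor
    · rw [lt_div_iff₀ hp2]; linarith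
    · field_simp; ring
  have hfmeas : AEMeasurable (T.indicator (fun _ => (1 : ENNReal))) μ :=
    (measurable_const.indicator hT).aemeasurable
  have hgmeas : AEMeasurable (fun x => (‖F x‖₊ : ENNReal) ^ (2 : ℝ)) μ :=
    hF.aestronglyMeasurable.enorm.pow_const _
  have holder := ENNReal.lintegral_mul_le_Lp_mul_Lq μ hconj hfmeas hgmeas
  have e1 : (∫⁻ a, (T.indicator (fun _ => (1 : ENNReal)) * fun x => (‖F x‖₊ : ENNReal) ^ (2 : ℝ)) a ∂μ)
      = ENNReal.ofReal (∫ x in T, ‖F x‖ ^ 2 ∂μ) := by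
    rw [ofReal_integral_eq_lintegral_ofReal (hint2.restrict)
      (Filter.Eventually.of_forall fun x => by positivity)]
    rw [← lintegral_indicator hT]
    congr 1
    ext x
    by_cases hx : x ∈ T
    · simp only [Pi.mul_apply, Set.indicator_of_mem hx, one_mul]
      rw [← enorm_eq_nnnorm, ← ofReal_norm,
        ENNReal.ofReal_rpow_of_nonneg (norm_nonneg _) (by norm_num : (0:ℝ) ≤ 2)]
      congr 1
      rw [← Real.rpow_natCast ‖F x‖ 2]
      norm_num
    · simp [Set.indicator_of_notMem hx]
  have e2 : (∫⁻ a, (T.indicator (fun _ => (1 : ENNReal)) a) ^ (p / (p - 2)) ∂μ) = μ T := by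
    rw [← lintegral_indicator_one hT]
    congr 1
    ext x
    by_cases hx : x ∈ T
    · simp [Set.indicator_of_mem hx]
    · simp [Set.indicator_of_notMem hx, ENNReal.zero_rpow_of_pos hconj.pos]
  have e3 : (∫⁻ a, ((‖F a‖₊ : ENNReal) ^ (2 : ℝ)) ^ (p / 2) ∂μ)
      = ENNReal.ofReal (∫ x, ‖F x‖ ^ p ∂μ) := by
    rw [ofReal_integral_eq_lintegral_ofReal hintp
      (Filter.Eventually.of_forall fun x => Real.rpow_nonneg (norm_nonneg _) _)]
    congr 1
    ext x
    rw [← ENNReal.rpow_mul, ← enorm_eq_nnnorm, ← ofReal_norm,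
      ENNReal.ofReal_rpow_of_nonneg (norm_nonneg _) (by positivity)]
    congr 1
    congr 1
    field_simp
  rw [e1, e2, e3] at holder
  set AT := ∫ x in T, ‖F x‖ ^ 2 ∂μ with hATdef
  set Ap := ∫ x, ‖F x‖ ^ p ∂μ with hApdef
  have hAp0 : 0 ≤ Ap := integral_nonneg fun x => Real.rpow_nonneg (norm_nonneg _) _
  have hμTm : μ T = ENNReal.ofReal m := (ENNReal.ofReal_toReal hμT).symm
  have holderR : AT ≤ m ^ ((p - 2) / p) * Ap ^ (2 / p) := by
    rw [hμTm, ENNReal.ofReal_rpow_of_nonneg hm0 (by positivity),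
      ENNReal.ofReal_rpow_of_nonneg hAp0 (by positivity),
      ← ENNReal.ofReal_mul (by positivity), one_div_div, one_div_div] at holder
    exact (ENNReal.ofReal_le_ofReal_iff (by positivity)).mp holder
  set θ : ℝ := (p - 2) / p with hθ
  have hθ0 : 0 < θ := by positivity
  set K : ℝ := (C * nf ^ p * nψ ^ (p - 2)) ^ (2 / p) with hK
  have hKpos : 0 < K := by
    have h1 : (0:ℝ) < nf ^ p := Real.rpow_pos_of_pos hnf _
    have h2' : (0:ℝ) < nψ ^ (p - 2) := Real.rpow_pos_of_pos hnψ _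
    exact Real.rpow_pos_of_pos (by positivity) _
  have hchain : (1 - ξ ^ 2) * (C * nf ^ 2) ≤ m ^ θ * K := by
    refine hAT.trans (holderR.trans ?_)
    have hle : Ap ^ (2 / p) ≤ K := Real.rpow_le_rpow hAp0 hLp (by positivity)
    exact mul_le_mul_of_nonneg_left hle (Real.rpow_nonneg hm0 _)
  set R : ℝ := (1 - ξ ^ 2) ^ (p / (p - 2)) * C / nψ ^ 2 with hR
  have hξ2 : 0 < 1 - ξ ^ 2 := by nlinarith
  have hRpos : 0 < R := by
    have := Real.rpow_pos_of_pos hξ2 (p / (p - 2))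
    positivity
  have hkey : R ^ θ * K = (1 - ξ ^ 2) * (C * nf ^ 2) := by
    have hLpos : 0 < R ^ θ * K := mul_pos (Real.rpow_pos_of_pos hRpos _) hKpos
    have hRHSpos : 0 < (1 - ξ ^ 2) * (C * nf ^ 2) := by positivity
    have h1 : (0:ℝ) < nf ^ p := Real.rpow_pos_of_pos hnf _
    have h2' : (0:ℝ) < nψ ^ (p - 2) := Real.rpow_pos_of_pos hnψ _
    have h3 : (0:ℝ) < (1 - ξ ^ 2) ^ (p / (p - 2)) := Real.rpow_pos_of_pos hξ2 _
    apply Real.log_injOn_pos (Set.mem_Ioi.mpr hLpos) (Set.mem_Ioi.mpr hRHSpos)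
    have hK3 : (0:ℝ) < C * nf ^ p * nψ ^ (p - 2) := by positivity
    rw [Real.log_mul (ne_of_gt (Real.rpow_pos_of_pos hRpos _)) (ne_of_gt hKpos),
      Real.log_rpow hRpos, hR, hK,
      Real.log_rpow hK3,
      Real.log_div (by positivity) (by positivity),
      Real.log_mul (ne_of_gt h3) (ne_of_gt hC),
      Real.log_rpow hξ2,
      Real.log_mul (ne_of_gt (by positivity : (0:ℝ) < C * nf ^ p)) (ne_of_gt h2'),
      Real.log_mul (ne_of_gt hC) (ne_of_gt h1),
      Real.log_rpow hnf, Real.log_rpow hnψ,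
      Real.log_pow,
      Real.log_mul (ne_of_gt hξ2) (by positivity),
      Real.log_mul (ne_of_gt hC) (by positivity),
      Real.log_pow]
    rw [hθ]
    push_cast
    field_simp [hp0.ne', hp2.ne']
    ring
  have hfin : R ^ θ ≤ m ^ θ := by
    rw [← hkey] at hchain
    exact le_of_mul_le_mul_right hchain hKpos
  have hRm : R ≤ m := by
    have h1 : (R ^ θ) ^ (1/θ) ≤ (m ^ θ) ^ (1/θ) :=
      Real.rpow_le_rpow (Real.rpow_nonneg hRpos.le _) hfin (by positivity)
    rw [← Real.rpow_mul hRpos.le, ← Real.rpow_mul hm0,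
      mul_one_div, div_self (ne_of_gt hθ0), Real.rpow_one, Real.rpow_one] at h1
    exact h1
  rw [hμTm]
  exact ENNReal.ofReal_le_ofReal hRm
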